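/- Let A be a Hermitian positive definite N×N matrix and h ∈ ℂ^N. For positive reals ρ, ε_u, ε_v, ξ with ε_u ≤ 1, define γ = ρ ε_u ε_v ξ² · h^H (A + ρ(1-ε_u) ε_v ξ² h h^H)^{-1} h. Then γ = (ρ ε_u ε_v ξ² t)/(1 + ρ(1-ε_u) ε_v ξ² t) where t = h^H A^{-1} h, and consequently γ < ε_u/(1-ε_u) whenever ε_u < 1. -/

import Mathlib

open Matrix
open scoped ComplexOrder

/-- SINR saturation: for A Hermitian positive definite, h ∈ ℂ^N, positive reals
ρ, ε_u, ε_v, ξ with ε_u ≤ 1, the quantity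
γ = ρ ε_u ε_v ξ² h^H (A + ρ(1-ε_u)ε_v ξ² h h^H)⁻¹ h satisfies
γ = ρ ε_u ε_v ξ² t / (1 + ρ(1-ε_u)ε_v ξ² t) with t = h^H A⁻¹ h, and
γ < ε_u/(1-ε_u) when ε_u < 1. -/
theorem stmt10 (N : ℕ) (A : Matrix (Fin N) (Fin N) ℂ) (h : Fin N → ℂ)
    (ρ εu εv ξ : ℝ) (hρ : 0 < ρ) (hεu : 0 < εu) (hεu1 : εu ≤ 1) (hεv : 0 < εv)
    (hξ : 0 < ξ) (hA : A.PosDef) :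
    (((ρ * εu * εv * ξ ^ 2 : ℝ) : ℂ) *
        (star h ⬝ᵥ ((A + ((ρ * (1 - εu) * εv * ξ ^ 2 : ℝ) : ℂ) •
          vecMulVec h (star h))⁻¹ *ᵥ h))
      = (((ρ * εu * εv * ξ ^ 2 : ℝ) : ℂ) * (star h ⬝ᵥ (A⁻¹ *ᵥ h))) /
        (1 + ((ρ * (1 - εu) * εv * ξ ^ 2 : ℝ) : ℂ) * (star h ⬝ᵥ (A⁻¹ *ᵥ h)))) ∧
    (εu < 1 →
      (((ρ * εu * εv * ξ ^ 2 : ℝ) : ℂ) *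
          (star h ⬝ᵥ ((A + ((ρ * (1 - εu) * εv * ξ ^ 2 : ℝ) : ℂ) •
            vecMulVec h (star h))⁻¹ *ᵥ h))).re < εu / (1 - εu)) := by
  have h1εu : (0:ℝ) ≤ 1 - εu := sub_nonneg.2 hεu1
  set c : ℝ := ρ * (1 - εu) * εv * ξ ^ 2 with hcdef
  set k : ℝ := ρ * εu * εv * ξ ^ 2 with hkdef
  have hc : (0:ℝ) ≤ c := by
    apply mul_nonneg (mul_nonneg (mul_nonneg hρ.le h1εu) hεv.le) (sq_nonneg ξ)
  set s : ℂ := star h ⬝ᵥ (A⁻¹ *ᵥ h) with hsdef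
  have hs : 0 ≤ s := (hA.posSemidef.inv).dotProduct_mulVec_nonneg h
  have hsim : s.im = 0 := by
    have := Complex.le_def.1 hs
    simpa using this.2.symm
  obtain ⟨t, ht⟩ : ∃ t : ℝ, s = (t : ℂ) := ⟨s.re, Complex.ext rfl (by simp [hsim])⟩
  have ht0 : 0 ≤ t := by
    rw [ht] at hs
    exact_mod_cast hs
  set d : ℂ := 1 + (c:ℂ) * s with hddef
  have hdRpos : (0:ℝ) < 1 + c * t := by positivity
  have hdreal : d = ((1 + c * t : ℝ) : ℂ) := by
    rw [hddef, ht]; push_cast; ring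
  have hd0 : d ≠ 0 := by
    rw [hdreal]
    exact_mod_cast hdRpos.ne'
  set P : Matrix (Fin N) (Fin N) ℂ := vecMulVec h (star h) with hPdef
  have hPv : ∀ x : Fin N → ℂ, P *ᵥ x = (star h ⬝ᵥ x) • h := by
    intro x
    ext i
    simp only [hPdef, vecMulVec, mulVec, dotProduct, Pi.smul_apply, smul_eq_mul,
      Matrix.of_apply]
    rw [Finset.sum_mul]
    exact Finset.sum_congr rfl fun j _ => by simp [Pi.star_apply]; ring
  have hPsd : ((c:ℂ) • P).PosSemidef := by
    refine Matrix.PosSemidef.of_dotProduct_mulVec_nonneg ?_ ?_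
    · ext i j
      simp [hPdef, vecMulVec, conjTranspose, mul_comm]
    · intro x
      rw [Matrix.smul_mulVec, hPv, dotProduct_smul, dotProduct_smul]
      have hsx : star x ⬝ᵥ h = starRingEnd ℂ (star h ⬝ᵥ x) := by
        simp [dotProduct, map_sum, mul_comm]
      rw [smul_eq_mul, smul_eq_mul, hsx, Complex.mul_conj]
      rw [← Complex.ofReal_mul]
      exact_mod_cast mul_nonneg hc (Complex.normSq_nonneg _)
  have hM : (A + (c:ℂ) • P).PosDef := hA.add_posSemidef hPsd
  have hAdet : IsUnit A.det := isUnit_iff_ne_zero.2 hA.det_pos.ne'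
  have hMdet : IsUnit (A + (c:ℂ) • P).det := isUnit_iff_ne_zero.2 hM.det_pos.ne'
  have hMv : (A + (c:ℂ) • P) *ᵥ (d⁻¹ • (A⁻¹ *ᵥ h)) = h := by
    rw [mulVec_smul, add_mulVec, Matrix.smul_mulVec, hPv, mulVec_mulVec,
      Matrix.mul_nonsing_inv A hAdet, one_mulVec, ← hsdef, smul_smul]
    have h2 : h + ((c:ℂ) * s) • h = d • h := by
      rw [hddef, add_smul, one_smul]
    rw [h2, smul_smul, inv_mul_cancel₀ hd0, one_smul]
  have hMinv : (A + (c:ℂ) • P)⁻¹ *ᵥ h = d⁻¹ • (A⁻¹ *ᵥ h) := by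
    conv_lhs => rw [← hMv]
    rw [mulVec_mulVec, Matrix.nonsing_inv_mul _ hMdet, one_mulVec]
  have hval : star h ⬝ᵥ ((A + (c:ℂ) • P)⁻¹ *ᵥ h) = d⁻¹ * s := by
    rw [hMinv, dotProduct_smul, smul_eq_mul, hsdef]
  constructor
  · rw [hval, div_eq_mul_inv]
    ring
  · intro hlt
    rw [hval]
    have hre : (k:ℂ) * (d⁻¹ * s) = ((k * (1 + c * t)⁻¹ * t : ℝ) : ℂ) := by
      rw [hdreal, ht]; push_cast; ring
    rw [hre, Complex.ofReal_re]
    have h1εu' : (0:ℝ) < 1 - εu := sub_pos.2 hlt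
    have hkc : k * (1 - εu) = εu * c := by rw [hcdef, hkdef]; ring
    rw [show k * (1 + c * t)⁻¹ * t = k * t / (1 + c * t) by ring,
      div_lt_div_iff₀ hdRpos h1εu']
    nlinarith [mul_nonneg hc ht0, hεu.le]
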